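/- (Counting lemma) Let p be prime, x ∈ Z_n × Z_n with ord(x) = p^m for some m ≥ 1, and A ⊆ Z_n × Z_n. If 1̂_A^{sym}(x) = 0, then |A ∩ ⟨px⟩^{⊥s}| = p · |A ∩ ⟨x⟩^{⊥s}|. -/

import Mathlib

open Complex
open scoped Classical

/-- The character value `e^{2πi t/n}` for `t : ZMod n`. -/
noncomputable def charVal (n : ℕ) (t : ZMod n) : ℂ :=
  Complex.exp (2 * Real.pi * Complex.I * (t.val : ℂ) / (n : ℂ))

/-- The symplectic form `⟨x,y⟩ = x₁y₂ - x₂y₁` on `ZMod n × ZMod n`. -/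
def sympForm {n : ℕ} (x y : ZMod n × ZMod n) : ZMod n :=
  x.1 * y.2 - x.2 * y.1

/-- Symplectic Fourier transform of the indicator of `A`. -/
noncomputable def symFT {n : ℕ} (A : Set (ZMod n × ZMod n)) (ξ : ZMod n × ZMod n) : ℂ :=
  ∑ᶠ a ∈ A, charVal n (sympForm a ξ)

/-- Euclidean Fourier transform of the indicator of `A`. -/
noncomputable def euclFT {n : ℕ} (A : Set (ZMod n × ZMod n)) (ξ : ZMod n × ZMod n) : ℂ :=
  ∑ᶠ a ∈ A, charVal n (a.1 * ξ.1 + a.2 * ξ.2)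

/-- Difference set `ΔA = {a - a' : a,a' ∈ A, a ≠ a'}`. -/
def diffSet {G : Type*} [AddGroup G] (A : Set G) : Set G :=
  {d | ∃ a ∈ A, ∃ a' ∈ A, a ≠ a' ∧ d = a - a'}

/-- `A ⊕ B = G`: every element of `G` is uniquely a sum `a + b` with `a ∈ A`, `b ∈ B`. -/
def IsTilingPair {G : Type*} [AddCommGroup G] (A B : Set G) : Prop :=
  ∀ g : G, ∃! p : G × G, p.1 ∈ A ∧ p.2 ∈ B ∧ p.1 + p.2 = g

/-- Symplectic orthogonal set `H^{⊥s}`. -/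
def sympPerp {n : ℕ} (H : Set (ZMod n × ZMod n)) : Set (ZMod n × ZMod n) :=
  {g | ∀ h ∈ H, sympForm g h = 0}

/-- `(A,S)` is a symplectic spectral pair: `|A| = |S|` and `ΔS ⊆ Z(1̂_A^{sym})`. -/
def IsSympSpectralPair {n : ℕ} (A S : Set (ZMod n × ZMod n)) : Prop :=
  Nat.card A = Nat.card S ∧ ∀ s ∈ S, ∀ s' ∈ S, s ≠ s' → symFT A (s - s') = 0

open Polynomial Finset

lemma core_counting (p m : ℕ) (hp : p.Prime) (hm : 1 ≤ m) (c : ℕ → ℕ)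
    (hz : ∑ j ∈ range (p ^ m), (c j : ℂ) *
        Complex.exp (2 * Real.pi * Complex.I / (p ^ m : ℕ)) ^ j = 0) :
    ∑ i ∈ range p, c (i * p ^ (m - 1)) = p * c 0 := by
  obtain ⟨m₁, rfl⟩ : ∃ m₁, m = m₁ + 1 := ⟨m - 1, by omega⟩
  simp only [Nat.add_sub_cancel] at *
  have hppos : 0 < p := hp.pos
  have hpm : (p ^ (m₁ + 1) : ℕ) ≠ 0 := pow_ne_zero _ hp.ne_zero
  have hepos : 0 < p ^ m₁ := pow_pos hppos _
  set ζ : ℂ := Complex.exp (2 * Real.pi * Complex.I / (p ^ (m₁ + 1) : ℕ)) with hζ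
  have hprim : IsPrimitiveRoot ζ (p ^ (m₁ + 1)) := Complex.isPrimitiveRoot_exp _ hpm
  set P : ℚ[X] := ∑ j ∈ range (p ^ (m₁ + 1)), C (c j : ℚ) * X ^ j with hP
  have hcoeff : ∀ k, k < p ^ (m₁ + 1) → P.coeff k = (c k : ℚ) := by
    intro k hk
    rw [hP, finset_sum_coeff]
    simp only [coeff_C_mul, coeff_X_pow, mul_ite, mul_one, mul_zero]
    rw [Finset.sum_ite_eq (range (p ^ (m₁ + 1))) k (fun j => (c j : ℚ))]
    simp [hk]
  have haeval : aeval ζ P = 0 := by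
    rw [hP, map_sum]
    simp only [map_mul, map_pow, aeval_C, aeval_X]
    simp only [map_natCast]
    exact hz
  obtain ⟨Q, hPQ⟩ : cyclotomic (p ^ (m₁ + 1)) ℚ ∣ P := by
    rw [cyclotomic_eq_minpoly_rat hprim (Nat.pos_of_ne_zero hpm)]
    exact minpoly.dvd ℚ ζ haeval
  have hΦ : cyclotomic (p ^ (m₁ + 1)) ℚ = ∑ i ∈ range p, (X ^ p ^ m₁) ^ i :=
    cyclotomic_prime_pow_eq_geom_sum hp
  have hQ0 : ∀ k, p ^ m₁ ≤ k → Q.coeff k = 0 := by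
    intro k hk
    rcases eq_or_ne Q 0 with h | h
    · simp [h]
    have hΦne : cyclotomic (p ^ (m₁ + 1)) ℚ ≠ 0 := cyclotomic_ne_zero _ ℚ
    have hdegP : P.natDegree ≤ p ^ (m₁ + 1) - 1 := by
      apply natDegree_sum_le_of_forall_le
      intro j hj
      exact le_trans (natDegree_C_mul_X_pow_le _ _)
        (Nat.le_sub_one_of_lt (Finset.mem_range.mp hj))
    have hdegΦ : (cyclotomic (p ^ (m₁ + 1)) ℚ).natDegree = p ^ m₁ * (p - 1) := by
      rw [natDegree_cyclotomic, Nat.totient_prime_pow hp (Nat.succ_pos _)]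
      simp
    have hmul := natDegree_mul hΦne h
    rw [← hPQ] at hmul
    have h1 : p ^ (m₁ + 1) = p ^ m₁ * p := by rw [pow_succ]
    have h2 : p ^ m₁ * (p - 1) + p ^ m₁ = p ^ m₁ * p := by
      rw [← Nat.mul_succ]
      congr 1
      omega
    have : Q.natDegree < p ^ m₁ := by omega
    exact coeff_eq_zero_of_natDegree_lt (lt_of_lt_of_le this hk)
  have hkey : ∀ i, i < p → (c (i * p ^ m₁) : ℚ) = Q.coeff 0 := by
    intro i hi
    have hlt : i * p ^ m₁ < p ^ (m₁ + 1) := by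
      rw [pow_succ, mul_comm (p ^ m₁) p]
      exact (Nat.mul_lt_mul_right hepos).mpr hi
    rw [← hcoeff _ hlt, hPQ, hΦ, Finset.sum_mul, finset_sum_coeff]
    have hterm : ∀ i' ∈ range p, ((X ^ p ^ m₁) ^ i' * Q).coeff (i * p ^ m₁) =
        if i' = i then Q.coeff 0 else 0 := by
      intro i' _
      rw [mul_comm, ← pow_mul, mul_comm (p ^ m₁) i', coeff_mul_X_pow']
      rcases lt_trichotomy i' i with h | h | h
      · rw [if_pos (Nat.mul_le_mul_right _ h.le), if_neg h.ne]
        apply hQ0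
        rw [← Nat.sub_mul]
        calc p ^ m₁ = 1 * p ^ m₁ := (one_mul _).symm
          _ ≤ (i - i') * p ^ m₁ := Nat.mul_le_mul_right _ (by omega)
      · subst h; simp
      · rw [if_neg (not_le.mpr ((Nat.mul_lt_mul_right hepos).mpr h)), if_neg h.ne']
    rw [Finset.sum_congr rfl hterm,
      Finset.sum_ite_eq' (range p) i (fun _ => Q.coeff 0)]
    simp [hi]
  have hfin : ((∑ i ∈ range p, c (i * p ^ m₁) : ℕ) : ℚ) = ((p * c 0 : ℕ) : ℚ) := by
    push_cast
    rw [Finset.sum_congr rfl (fun i hi => hkey i (Finset.mem_range.mp hi)),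
      Finset.sum_const, Finset.card_range, nsmul_eq_mul]
    have h0 : (c 0 : ℚ) = Q.coeff 0 := by simpa using hkey 0 hppos
    rw [h0]
  exact_mod_cast hfin

lemma sympForm_nsmul {n : ℕ} (a y : ZMod n × ZMod n) (k : ℕ) :
    sympForm a (k • y) = (k : ZMod n) * sympForm a y := by
  rcases y with ⟨y1, y2⟩
  simp only [sympForm, Prod.smul_mk, smul_eq_mul, nsmul_eq_mul]
  ring

lemma sympForm_zsmul {n : ℕ} (a y : ZMod n × ZMod n) (k : ℤ) :
    sympForm a (k • y) = (k : ZMod n) * sympForm a y := by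
  rcases y with ⟨y1, y2⟩
  simp only [sympForm, Prod.smul_mk, smul_eq_mul, zsmul_eq_mul]
  ring

lemma mem_sympPerp_zmultiples {n : ℕ} (y a : ZMod n × ZMod n) :
    a ∈ sympPerp ((AddSubgroup.zmultiples y : AddSubgroup _) : Set (ZMod n × ZMod n)) ↔
      sympForm a y = 0 := by
  constructor
  · intro h
    exact h y (AddSubgroup.mem_zmultiples y)
  · intro h z hz
    obtain ⟨k, rfl⟩ := AddSubgroup.mem_zmultiples_iff.mp hz
    rw [sympForm_zsmul, h, mul_zero]

theorem counting_lemma (n p m : ℕ) (hn : 0 < n) (hp : p.Prime) (hm : 1 ≤ m)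
    (x : ZMod n × ZMod n) (hx : addOrderOf x = p ^ m)
    (A : Set (ZMod n × ZMod n)) (hz : symFT A x = 0) :
    Nat.card
        (A ∩ sympPerp ((AddSubgroup.zmultiples (p • x) : AddSubgroup _) : Set (ZMod n × ZMod n)) :
          Set (ZMod n × ZMod n)) =
      p * Nat.card
        (A ∩ sympPerp ((AddSubgroup.zmultiples x : AddSubgroup _) : Set (ZMod n × ZMod n)) :
          Set (ZMod n × ZMod n)) := by
  haveI : NeZero n := ⟨hn.ne'⟩
  have hppos : 0 < p := hp.pos
  have hpmpos : 0 < p ^ m := pow_pos hppos m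
  have hpmn : p ^ m ∣ n := by
    rw [← hx]
    apply addOrderOf_dvd_of_nsmul_eq_zero
    have h1 : (n : ZMod n) = 0 := ZMod.natCast_self n
    ext
    · simp [nsmul_eq_mul, h1]
    · simp [nsmul_eq_mul, h1]
  obtain ⟨d, hd⟩ : ∃ d, d * p ^ m = n := ⟨n / p ^ m, Nat.div_mul_cancel hpmn⟩
  have hdpos : 0 < d := by
    rcases Nat.eq_zero_or_pos d with h | h
    · subst h; simp at hd; omega
    · exact h
  set φ : ZMod n × ZMod n → ZMod n := fun a => sympForm a x with hφ_def
  have hφord : ∀ a, ((p ^ m : ℕ) : ZMod n) * φ a = 0 := by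
    intro a
    have h1 : (p ^ m) • x = 0 := by rw [← hx]; exact addOrderOf_nsmul_eq_zero x
    have h2 : ((p ^ m : ℕ) : ZMod n) * sympForm a x = sympForm a ((p ^ m) • x) :=
      (sympForm_nsmul a x (p ^ m)).symm
    rw [h1] at h2
    rw [show φ a = sympForm a x from rfl, h2]
    simp [sympForm]
  -- divisibility of values
  have hvd : ∀ a, n ∣ p ^ m * (φ a).val := by
    intro a
    have h := hφord a
    push_cast at h
    rw [← ZMod.natCast_eq_zero_iff]
    push_cast
    rw [ZMod.natCast_val, ZMod.cast_id]
    exact h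
  set j : ZMod n × ZMod n → ℕ := fun a => (φ a).val / d with hj_def
  have hval : ∀ a, (φ a).val = d * j a := by
    intro a
    have h1 : d ∣ (φ a).val := by
      obtain ⟨t, ht⟩ := hvd a
      have h2 : (φ a).val * p ^ m = (d * t) * p ^ m := by
        calc (φ a).val * p ^ m = p ^ m * (φ a).val := mul_comm _ _
          _ = n * t := ht
          _ = (d * p ^ m) * t := by rw [hd]
          _ = (d * t) * p ^ m := by ring
      exact ⟨t, Nat.eq_of_mul_eq_mul_right hpmpos h2⟩
    exact (Nat.mul_div_cancel' h1).symm
  have hjlt : ∀ a, j a < p ^ m := by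
    intro a
    have h1 : d * j a < d * p ^ m := by
      rw [← hval a, hd]
      exact ZMod.val_lt _
    exact Nat.lt_of_mul_lt_mul_left h1
  set Af : Finset (ZMod n × ZMod n) := A.toFinset with hAf
  set c : ℕ → ℕ := fun k => (Af.filter (fun a => j a = k)).card with hc
  -- characterize the two intersections
  have hmemA : ∀ a, a ∈ Af ↔ a ∈ A := fun a => Set.mem_toFinset
  have hset2 : (A ∩ sympPerp ((AddSubgroup.zmultiples x : AddSubgroup _) :
      Set (ZMod n × ZMod n))) = ↑(Af.filter (fun a => j a = 0)) := by
    ext a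
    simp only [Set.mem_inter_iff, Finset.coe_filter, Set.mem_setOf_eq, hmemA,
      mem_sympPerp_zmultiples]
    constructor
    · rintro ⟨hA, h0⟩
      refine ⟨hA, ?_⟩
      have h2 : (φ a).val = 0 := by rw [show φ a = sympForm a x from rfl, h0]; simp
      rw [hval a] at h2
      rcases Nat.mul_eq_zero.mp h2 with h | h
      · omega
      · exact h
    · rintro ⟨hA, h0⟩
      refine ⟨hA, ?_⟩
      have h1 : (φ a).val = 0 := by rw [hval a, h0, mul_zero]
      have : φ a = 0 := by
        rwa [ZMod.val_eq_zero] at h1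
      exact this
  have hset1 : (A ∩ sympPerp ((AddSubgroup.zmultiples (p • x) : AddSubgroup _) :
      Set (ZMod n × ZMod n))) = ↑(Af.filter (fun a => p ^ (m - 1) ∣ j a)) := by
    ext a
    simp only [Set.mem_inter_iff, Finset.coe_filter, Set.mem_setOf_eq, hmemA,
      mem_sympPerp_zmultiples]
    have hform : sympForm a (p • x) = ((p : ℕ) : ZMod n) * φ a := sympForm_nsmul a x p
    have hiff : sympForm a (p • x) = 0 ↔ p ^ (m - 1) ∣ j a := by
      rw [hform]
      have hcast : ((p : ℕ) : ZMod n) * φ a = (((p * (φ a).val : ℕ)) : ZMod n) := by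
        push_cast
        rw [ZMod.natCast_val, ZMod.cast_id]
      rw [hcast, ZMod.natCast_eq_zero_iff]
      rw [hval a, ← hd]
      have h1 : p * (d * j a) = (d * p) * j a := by ring
      have h2 : d * p ^ m = (d * p) * p ^ (m - 1) := by
        rw [mul_assoc]
        congr 1
        conv_lhs => rw [show m = (m - 1) + 1 from by omega]
        rw [pow_succ]
        ring
      rw [h1, h2]
      exact mul_dvd_mul_iff_left (by positivity)
    rw [hiff]
  -- the exponential sum
  set ζ : ℂ := Complex.exp (2 * Real.pi * Complex.I / ((p ^ m : ℕ) : ℂ)) with hζ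
  have hchar : ∀ a, charVal n (φ a) = ζ ^ (j a) := by
    intro a
    rw [charVal, hval a, hζ, ← Complex.exp_nat_mul]
    congr 1
    have hnc : (n : ℂ) = (d : ℂ) * ((p ^ m : ℕ) : ℂ) := by exact_mod_cast hd.symm
    have hdne : (d : ℂ) ≠ 0 := Nat.cast_ne_zero.mpr hdpos.ne'
    have hpmne : ((p ^ m : ℕ) : ℂ) ≠ 0 := Nat.cast_ne_zero.mpr hpmpos.ne'
    have hpne : ((p : ℂ)) ≠ 0 := Nat.cast_ne_zero.mpr hppos.ne'
    rw [hnc]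
    push_cast
    field_simp
  have hsymft : symFT A x = ∑ a ∈ Af, ζ ^ (j a) := by
    rw [symFT, finsum_mem_eq_toFinset_sum]
    exact Finset.sum_congr rfl fun a _ => hchar a
  have hcsum : ∑ k ∈ range (p ^ m), (c k : ℂ) * ζ ^ k = 0 := by
    rw [← hz, hsymft]
    rw [← Finset.sum_fiberwise_of_maps_to (fun a _ => Finset.mem_range.mpr (hjlt a))
      (fun a => ζ ^ (j a))]
    refine Finset.sum_congr rfl fun k hk => ?_
    rw [Finset.sum_congr rfl (fun a ha => by rw [(Finset.mem_filter.mp ha).2]),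
      Finset.sum_const, nsmul_eq_mul]
  have hcore := core_counting p m hp hm c (by exact hcsum)
  -- split the dvd-filter into fibers
  have hsplit : (Af.filter (fun a => p ^ (m - 1) ∣ j a)).card =
      ∑ i ∈ range p, c (i * p ^ (m - 1)) := by
    have hq : 0 < p ^ (m - 1) := pow_pos hppos _
    set s := Af.filter (fun a => p ^ (m - 1) ∣ j a) with hs
    have hmaps : ∀ a ∈ s, j a / p ^ (m - 1) ∈ range p := by
      intro a ha
      rw [Finset.mem_range, Nat.div_lt_iff_lt_mul hq]
      calc j a < p ^ m := hjlt a
        _ = p * p ^ (m - 1) := by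
            conv_lhs => rw [show m = (m - 1) + 1 from by omega]
            rw [pow_succ]; ring
    have h1 := Finset.sum_fiberwise_of_maps_to hmaps (fun _ => (1 : ℕ))
    simp only [Finset.sum_const, smul_eq_mul, mul_one] at h1
    rw [← h1]
    refine Finset.sum_congr rfl fun i hi => ?_
    congr 1
    rw [hs, Finset.filter_filter]
    apply Finset.filter_congr
    intro a _
    constructor
    · rintro ⟨hdvd, hdiv⟩
      rw [← hdiv]
      exact (Nat.div_mul_cancel hdvd).symm
    · intro h
      refine ⟨⟨i, by rw [h, mul_comm]⟩, ?_⟩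
      rw [h, Nat.mul_div_cancel _ hq]
  -- finish
  have hcard1 : Nat.card (A ∩ sympPerp ((AddSubgroup.zmultiples (p • x) : AddSubgroup _) :
      Set (ZMod n × ZMod n)) : Set (ZMod n × ZMod n)) =
      (Af.filter (fun a => p ^ (m - 1) ∣ j a)).card := by
    rw [hset1, Nat.card_coe_set_eq, Set.ncard_coe_finset]
  have hcard2 : Nat.card (A ∩ sympPerp ((AddSubgroup.zmultiples x : AddSubgroup _) :
      Set (ZMod n × ZMod n)) : Set (ZMod n × ZMod n)) =
      (Af.filter (fun a => j a = 0)).card := by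
    rw [hset2, Nat.card_coe_set_eq, Set.ncard_coe_finset]
  rw [hcard1, hcard2, hsplit, hcore]
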